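/- Fix a real number A with 0 < A < 1, positive integers P, Q, set c := P/Q, and let γ, δ be integers with Q·δ − P·γ = 1. For 0 < t < A set U(t) := A^{−c}/t, Λ(U) := U·((1 − A^{c+1}U)/(1 − A^{c−1}U))^c (real power of the positive ratio), X^BEM(U) := Λ(U)^{−Q}, X^ACEH(t) := t·((1−At)/(1−A⁻¹t))^c, y^BEM(U) := γ·Real.log U + δ·Real.log(1 − A^{c+1}U) − δ·Real.log(1 − A^{c−1}U), and y^ACEH(t) := Real.log((1−A⁻¹t)/(1−At)). Then for every z with 0 < z < A: y^ACEH(z) · deriv (fun t ↦ Real.log (X^ACEH t)) z = (1/Q) · (Q·y^BEM(U(z)) + γ·Real.log(X^BEM(U(z))) − Real.log(A²)) · deriv (fun t ↦ Real.log (X^BEM (U t))) z. -/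

import Mathlib

open Real

/-- `ω_{0,1}` in the two presentations: as an identity of derivatives in the coordinate `z`,
`y^ACEH(z) · d/dz[log X^ACEH] = (1/Q)(Q·y^BEM(U(z)) + γ·log X^BEM(U(z)) - log A²) · d/dz[log X^BEM(U(·))]`,
where `U(t) = A^{-c}/t`, `Λ(U) = U·((1-A^{c+1}U)/(1-A^{c-1}U))^c`, `X^BEM = Λ^{-Q}`,
`X^ACEH(t) = t·((1-At)/(1-A⁻¹t))^c`, `y^BEM(U) = γ log U + δ log(1-A^{c+1}U) - δ log(1-A^{c-1}U)`,
`y^ACEH(t) = log((1-A⁻¹t)/(1-At))`, `c = P/Q`, and `Qδ - Pγ = 1`. -/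
theorem stmt_5 (A : ℝ) (hA0 : 0 < A) (hA1 : A < 1) (P Q : ℕ) (hP : 0 < P) (hQ : 0 < Q)
    (γ δ : ℤ) (hSL : (Q : ℤ) * δ - (P : ℤ) * γ = 1)
    (c : ℝ) (hc : c = (P : ℝ) / (Q : ℝ))
    (U Λ XBEM XACEH yBEM yACEH : ℝ → ℝ)
    (hU : ∀ t, U t = A ^ (-c) / t)
    (hΛ : ∀ u, Λ u = u * ((1 - A ^ (c + 1) * u) / (1 - A ^ (c - 1) * u)) ^ c)
    (hXBEM : ∀ u, XBEM u = (Λ u) ^ (-(Q : ℝ)))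
    (hXACEH : ∀ t, XACEH t = t * ((1 - A * t) / (1 - A⁻¹ * t)) ^ c)
    (hyBEM : ∀ u, yBEM u = (γ : ℝ) * Real.log u + (δ : ℝ) * Real.log (1 - A ^ (c + 1) * u)
        - (δ : ℝ) * Real.log (1 - A ^ (c - 1) * u))
    (hyACEH : ∀ t, yACEH t = Real.log ((1 - A⁻¹ * t) / (1 - A * t))) :
    ∀ z : ℝ, 0 < z → z < A →
      yACEH z * deriv (fun t => Real.log (XACEH t)) z
        = (1 / (Q : ℝ)) *
            ((Q : ℝ) * yBEM (U z) + (γ : ℝ) * Real.log (XBEM (U z)) - Real.log (A ^ 2)) *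
            deriv (fun t => Real.log (XBEM (U t))) z := by
  intro z hz0 hzA
  have hQ0 : (Q : ℝ) ≠ 0 := Nat.cast_ne_zero.mpr hQ.ne'
  have hA0' : A ≠ 0 := hA0.ne'
  have hAi0 : (0:ℝ) < A⁻¹ := inv_pos.mpr hA0
  have hQc : (Q : ℝ) * c = (P : ℝ) := by rw [hc]; field_simp
  have hSLr : (Q : ℝ) * (δ : ℝ) - (P : ℝ) * (γ : ℝ) = 1 := by exact_mod_cast hSL
  -- basic positivity facts for any t ∈ (0, A)
  have pos1 : ∀ t : ℝ, 0 < t → t < A → 0 < 1 - A * t := by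
    intro t ht0 htA; nlinarith
  have pos2 : ∀ t : ℝ, 0 < t → t < A → 0 < 1 - A⁻¹ * t := by
    intro t ht0 htA
    have h : A⁻¹ * t < A⁻¹ * A := mul_lt_mul_of_pos_left htA hAi0
    rw [inv_mul_cancel₀ hA0'] at h
    linarith
  -- auxiliary computations
  have hU1 : ∀ t : ℝ, t ≠ 0 → A ^ (c + 1) * U t = A / t := by
    intro t ht
    rw [hU, mul_div_assoc', ← Real.rpow_add hA0]
    norm_num
  have hU2 : ∀ t : ℝ, t ≠ 0 → A ^ (c - 1) * U t = A⁻¹ / t := by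
    intro t ht
    rw [hU, mul_div_assoc', ← Real.rpow_add hA0]
    rw [show c - 1 + -c = -1 by ring, Real.rpow_neg_one]
  have e1 : ∀ t : ℝ, t ≠ 0 → 1 - A ^ (c + 1) * U t = -((A - t) / t) := by
    intro t ht; rw [hU1 t ht]; field_simp; ring
  have e2 : ∀ t : ℝ, t ≠ 0 → 1 - A ^ (c - 1) * U t = -((A⁻¹ - t) / t) := by
    intro t ht; rw [hU2 t ht]; field_simp; ring
  -- the key pointwise identity of logs
  have key : ∀ t ∈ Set.Ioo (0:ℝ) A, Real.log (XBEM (U t))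
      = (Q : ℝ) * Real.log (XACEH t) - (P : ℝ) * Real.log A := by
    rintro t ⟨ht0, htA⟩
    have h1 := pos1 t ht0 htA
    have h2 := pos2 t ht0 htA
    have hAmt : (0:ℝ) < A - t := by linarith
    have hAimt : (0:ℝ) < A⁻¹ - t := by
      have : (1:ℝ) < A⁻¹ := (one_lt_inv₀ hA0).mpr hA1
      linarith
    have hT : (0:ℝ) < (1 - A * t) / (1 - A⁻¹ * t) := div_pos h1 h2
    have hS : (0:ℝ) < (1 - A⁻¹ * t) / (1 - A * t) := div_pos h2 h1
    have hratio : (1 - A ^ (c + 1) * U t) / (1 - A ^ (c - 1) * U t)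
        = (A * A) * ((1 - A⁻¹ * t) / (1 - A * t)) := by
      rw [e1 t ht0.ne', e2 t ht0.ne', neg_div_neg_eq]
      field_simp
    have hΛeq : Λ (U t) = A ^ c * ((1 - A⁻¹ * t) / (1 - A * t)) ^ c / t := by
      rw [hΛ, hratio, hU]
      rw [Real.mul_rpow (by positivity) hS.le]
      have hAA : (A * A) ^ c = A ^ (2 * c) := by
        rw [show A * A = A ^ (2:ℝ) by rw [show (2:ℝ) = ((2:ℕ):ℝ) by norm_num, Real.rpow_natCast]; ring]
        rw [← Real.rpow_mul hA0.le]
      rw [hAA]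
      rw [div_mul_eq_mul_div, ← mul_assoc, ← Real.rpow_add hA0]
      ring_nf
    have hΛpos : 0 < Λ (U t) := by rw [hΛeq]; positivity
    have hlogΛ : Real.log (Λ (U t))
        = c * Real.log A + c * Real.log ((1 - A⁻¹ * t) / (1 - A * t)) - Real.log t := by
      rw [hΛeq, Real.log_div (by positivity) ht0.ne',
        Real.log_mul (by positivity) (by positivity),
        Real.log_rpow hA0, Real.log_rpow hS]
    have hlogXA : Real.log (XACEH t)
        = Real.log t + c * Real.log ((1 - A * t) / (1 - A⁻¹ * t)) := by
      rw [hXACEH, Real.log_mul ht0.ne' (by positivity), Real.log_rpow hT]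
    have hST : Real.log ((1 - A⁻¹ * t) / (1 - A * t))
        = - Real.log ((1 - A * t) / (1 - A⁻¹ * t)) := by
      rw [Real.log_div h2.ne' h1.ne', Real.log_div h1.ne' h2.ne']; ring
    rw [hXBEM, Real.log_rpow hΛpos, hlogΛ, hlogXA, hST]
    linear_combination (-Real.log A) * hQc
  -- derivative identity
  have hev : (fun t => Real.log (XBEM (U t)))
      =ᶠ[nhds z] (fun t => (Q : ℝ) * Real.log (XACEH t) - (P : ℝ) * Real.log A) := by
    filter_upwards [Ioo_mem_nhds hz0 hzA] with t ht using key t ht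
  have hderiv : deriv (fun t => Real.log (XBEM (U t))) z
      = (Q : ℝ) * deriv (fun t => Real.log (XACEH t)) z := by
    rw [hev.deriv_eq]
    rw [show (fun t => (Q : ℝ) * Real.log (XACEH t) - (P : ℝ) * Real.log A)
        = (fun t => (fun s => (Q : ℝ) * Real.log (XACEH s)) t - (P : ℝ) * Real.log A) from rfl]
    rw [deriv_sub_const]
    exact deriv_const_mul_field _
  -- log values at z
  have h1 := pos1 z hz0 hzA
  have h2 := pos2 z hz0 hzA
  have hAmz : (0:ℝ) < A - z := by linarith
  have hAimz : (0:ℝ) < A⁻¹ - z := by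
    have : (1:ℝ) < A⁻¹ := (one_lt_inv₀ hA0).mpr hA1
    linarith
  have hT : (0:ℝ) < (1 - A * z) / (1 - A⁻¹ * z) := div_pos h1 h2
  have hlogU : Real.log (U z) = -c * Real.log A - Real.log z := by
    rw [hU, Real.log_div (by positivity) hz0.ne', Real.log_rpow hA0]
  have hl1 : Real.log (1 - A ^ (c + 1) * U z)
      = Real.log A + Real.log (1 - A⁻¹ * z) - Real.log z := by
    rw [e1 z hz0.ne', Real.log_neg_eq_log, Real.log_div hAmz.ne' hz0.ne',
      show A - z = A * (1 - A⁻¹ * z) by field_simp,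
      Real.log_mul hA0' h2.ne']
  have hl2 : Real.log (1 - A ^ (c - 1) * U z)
      = -Real.log A + Real.log (1 - A * z) - Real.log z := by
    rw [e2 z hz0.ne', Real.log_neg_eq_log, Real.log_div hAimz.ne' hz0.ne',
      show A⁻¹ - z = A⁻¹ * (1 - A * z) by field_simp,
      Real.log_mul (by positivity) h1.ne', Real.log_inv]
  have hyA : yACEH z = Real.log (1 - A⁻¹ * z) - Real.log (1 - A * z) := by
    rw [hyACEH, Real.log_div h2.ne' h1.ne']
  have hlogXA : Real.log (XACEH z)
      = Real.log z + c * (Real.log (1 - A * z) - Real.log (1 - A⁻¹ * z)) := by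
    rw [hXACEH, Real.log_mul hz0.ne' (by positivity), Real.log_rpow hT,
      Real.log_div h1.ne' h2.ne']
  have hkeyz := key z ⟨hz0, hzA⟩
  have hlogA2 : Real.log (A ^ 2) = 2 * Real.log A := by
    rw [Real.log_pow]; norm_num
  -- the prefactor identity
  have hpre : (Q : ℝ) * yBEM (U z) + (γ : ℝ) * Real.log (XBEM (U z)) - Real.log (A ^ 2)
      = yACEH z := by
    rw [hyBEM, hlogU, hl1, hl2, hkeyz, hlogXA, hlogA2, hyA]
    linear_combination ((γ : ℝ) * (Real.log (1 - A * z) - Real.log (1 - A⁻¹ * z))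
        - (γ : ℝ) * Real.log A) * hQc
      + (2 * Real.log A + Real.log (1 - A⁻¹ * z) - Real.log (1 - A * z)) * hSLr
  rw [hderiv, hpre]
  field_simp
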